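/- Let LA_P ⊂ ℝ² be the lopsided amoeba of P(z,w) = c₁z + c₂w + c₃z⁻¹ + c₄w⁻¹ + c₅ and let a = 2√(|c₁||c₃|) + 2√(|c₂||c₄|). If |c₅| > a, then the complement ℝ²∖LA_P has exactly one bounded connected component; if |c₅| ≤ a, then ℝ²∖LA_P has no bounded connected component. In other words, the genus of the lopsided amoeba equals 1 if |c₅| > a and equals 0 otherwise. -/

import Mathlib

/-- The five monomial moduli of the F₀ Newton polynomial
`P = c₁ z + c₂ w + c₃ z⁻¹ + c₄ w⁻¹ + c₅` at `(x,y) ∈ ℝ²`. -/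
noncomputable def F0mono (c₁ c₂ c₃ c₄ c₅ : ℂ) (p : ℝ × ℝ) : Fin 5 → ℝ :=
  ![‖c₁‖ * Real.exp p.1, ‖c₂‖ * Real.exp p.2,
    ‖c₃‖ * Real.exp (-p.1), ‖c₄‖ * Real.exp (-p.2),
    ‖c₅‖]

/-- The lopsided amoeba of the F₀ Newton polynomial: the points `(x,y) ∈ ℝ²`
where the list of five monomial moduli is *not* lopsided, i.e. no entry
strictly exceeds the sum of all the others. -/
noncomputable def F0lopsidedAmoeba (c₁ c₂ c₃ c₄ c₅ : ℂ) : Set (ℝ × ℝ) :=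
  {p | ∀ i : Fin 5, F0mono c₁ c₂ c₃ c₄ c₅ p i ≤
        ∑ j ∈ Finset.univ.erase i, F0mono c₁ c₂ c₃ c₄ c₅ p j}

open Real Bornology Set

/-- The region where the `i`-th monomial dominates. -/
noncomputable def F0R (c₁ c₂ c₃ c₄ c₅ : ℂ) (i : Fin 5) : Set (ℝ × ℝ) :=
  {p | ∑ j ∈ Finset.univ.erase i, F0mono c₁ c₂ c₃ c₄ c₅ p j < F0mono c₁ c₂ c₃ c₄ c₅ p i}

/-- The candidate bounded region: where the constant term dominates. -/
noncomputable def F0S (c₁ c₂ c₃ c₄ c₅ : ℂ) : Set (ℝ × ℝ) :=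
  {p | ‖c₁‖ * Real.exp p.1 + ‖c₂‖ * Real.exp p.2 +
       ‖c₃‖ * Real.exp (-p.1) + ‖c₄‖ * Real.exp (-p.2) < ‖c₅‖}

variable (c₁ c₂ c₃ c₄ c₅ : ℂ)

lemma F0mono_nonneg (p : ℝ × ℝ) (i : Fin 5) : 0 ≤ F0mono c₁ c₂ c₃ c₄ c₅ p i := by
  fin_cases i <;> simp [F0mono] <;> positivity

lemma F0mono_continuous (i : Fin 5) : Continuous (fun p => F0mono c₁ c₂ c₃ c₄ c₅ p i) := by
  fin_cases i <;> simp [F0mono] <;> fun_prop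

lemma F0compl_eq : (F0lopsidedAmoeba c₁ c₂ c₃ c₄ c₅)ᶜ = ⋃ i, F0R c₁ c₂ c₃ c₄ c₅ i := by
  ext p
  simp [F0lopsidedAmoeba, F0R, not_forall, not_le]

lemma F0R_open (i : Fin 5) : IsOpen (F0R c₁ c₂ c₃ c₄ c₅ i) := by
  apply isOpen_lt
  · exact continuous_finset_sum _ fun j _ => F0mono_continuous c₁ c₂ c₃ c₄ c₅ j
  · exact F0mono_continuous c₁ c₂ c₃ c₄ c₅ i

lemma F0R_disjoint {i k : Fin 5} (h : i ≠ k) :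
    Disjoint (F0R c₁ c₂ c₃ c₄ c₅ i) (F0R c₁ c₂ c₃ c₄ c₅ k) := by
  rw [Set.disjoint_left]
  intro p hi hk
  have h1 : F0mono c₁ c₂ c₃ c₄ c₅ p k ≤ ∑ j ∈ Finset.univ.erase i, F0mono c₁ c₂ c₃ c₄ c₅ p j :=
    Finset.single_le_sum (fun j _ => F0mono_nonneg c₁ c₂ c₃ c₄ c₅ p j)
      (Finset.mem_erase.2 ⟨h.symm, Finset.mem_univ k⟩)
  have h2 : F0mono c₁ c₂ c₃ c₄ c₅ p i ≤ ∑ j ∈ Finset.univ.erase k, F0mono c₁ c₂ c₃ c₄ c₅ p j :=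
    Finset.single_le_sum (fun j _ => F0mono_nonneg c₁ c₂ c₃ c₄ c₅ p j)
      (Finset.mem_erase.2 ⟨h, Finset.mem_univ i⟩)
  simp only [F0R, Set.mem_setOf_eq] at hi hk
  linarith

lemma F0mem_R_iff (p : ℝ × ℝ) (i : Fin 5) :
    p ∈ F0R c₁ c₂ c₃ c₄ c₅ i ↔
      ∑ j, F0mono c₁ c₂ c₃ c₄ c₅ p j < 2 * F0mono c₁ c₂ c₃ c₄ c₅ p i := by
  rw [F0R, Set.mem_setOf_eq, Finset.sum_erase_eq_sub (Finset.mem_univ i)]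
  constructor <;> intro <;> linarith

lemma F0sum_mono (p : ℝ × ℝ) :
    ∑ j, F0mono c₁ c₂ c₃ c₄ c₅ p j =
      ‖c₁‖ * Real.exp p.1 + ‖c₂‖ * Real.exp p.2 +
      ‖c₃‖ * Real.exp (-p.1) + ‖c₄‖ * Real.exp (-p.2) +
      ‖c₅‖ := by
  simp [Fin.sum_univ_five, F0mono]

lemma F0R4_eq : F0R c₁ c₂ c₃ c₄ c₅ 4 = F0S c₁ c₂ c₃ c₄ c₅ := by
  ext p
  rw [F0mem_R_iff, F0sum_mono]
  simp only [F0mono, F0S, Set.mem_setOf_eq]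
  norm_num
  have e : (![‖c₁‖ * rexp p.1, ‖c₂‖ * rexp p.2, ‖c₃‖ * rexp (-p.1), ‖c₄‖ * rexp (-p.2), ‖c₅‖] :
      Fin 5 → ℝ) 4 = ‖c₅‖ := rfl
  rw [e]
  constructor <;> intro <;> linarith

lemma F0S_convex : Convex ℝ (F0S c₁ c₂ c₃ c₄ c₅) := by
  intro p hp q hq a b ha hb hab
  have key : ∀ u w : ℝ, Real.exp (a*u + b*w) ≤ a * Real.exp u + b * Real.exp w := by
    intro u w
    have := convexOn_exp.2 (Set.mem_univ u) (Set.mem_univ w) ha hb hab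
    simpa [smul_eq_mul] using this
  have hA := norm_nonneg c₁
  have hB := norm_nonneg c₂
  have hC := norm_nonneg c₃
  have hD := norm_nonneg c₄
  simp only [F0S, Set.mem_setOf_eq] at hp hq ⊢
  have e1 : (a • p + b • q).1 = a * p.1 + b * q.1 := by simp
  have e2 : (a • p + b • q).2 = a * p.2 + b * q.2 := by simp
  rw [e1, e2]
  have h1 := mul_le_mul_of_nonneg_left (key p.1 q.1) hA
  have h2 := mul_le_mul_of_nonneg_left (key p.2 q.2) hB
  have h3' := mul_le_mul_of_nonneg_left (key (-p.1) (-q.1)) hC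
  have h4' := mul_le_mul_of_nonneg_left (key (-p.2) (-q.2)) hD
  rw [show a * -p.1 + b * -q.1 = -(a * p.1 + b * q.1) by ring] at h3'
  rw [show a * -p.2 + b * -q.2 = -(a * p.2 + b * q.2) by ring] at h4'
  have hE' : a * ‖c₅‖ + b * ‖c₅‖ = ‖c₅‖ := by
    rw [← add_mul, hab, one_mul]
  have main : ∀ Fp Fq : ℝ, Fp < ‖c₅‖ → Fq < ‖c₅‖ →
      a * Fp + b * Fq < ‖c₅‖ := by
    intro Fp Fq hFp hFq
    rcases eq_or_lt_of_le ha with h0 | h0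
    · have hb1 : b = 1 := by linarith
      rw [← h0, hb1]; linarith
    · have t1 : a * Fp < a * ‖c₅‖ := mul_lt_mul_of_pos_left hFp h0
      have t2 : b * Fq ≤ b * ‖c₅‖ := mul_le_mul_of_nonneg_left hFq.le hb
      linarith
  calc ‖c₁‖ * rexp (a * p.1 + b * q.1) + ‖c₂‖ * rexp (a * p.2 + b * q.2) +
        ‖c₃‖ * rexp (-(a * p.1 + b * q.1)) + ‖c₄‖ * rexp (-(a * p.2 + b * q.2))
      ≤ ‖c₁‖ * (a * rexp p.1 + b * rexp q.1) +
        ‖c₂‖ * (a * rexp p.2 + b * rexp q.2) +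
        ‖c₃‖ * (a * rexp (-p.1) + b * rexp (-q.1)) +
        ‖c₄‖ * (a * rexp (-p.2) + b * rexp (-q.2)) := by linarith
    _ = a * (‖c₁‖ * rexp p.1 + ‖c₂‖ * rexp p.2 +
          ‖c₃‖ * rexp (-p.1) + ‖c₄‖ * rexp (-p.2)) +
        b * (‖c₁‖ * rexp q.1 + ‖c₂‖ * rexp q.2 +
          ‖c₃‖ * rexp (-q.1) + ‖c₄‖ * rexp (-q.2)) := by ring
    _ < ‖c₅‖ := main _ _ hp hq

lemma F0S_bounded (h₁ : c₁ ≠ 0) (h₂ : c₂ ≠ 0) (h₃ : c₃ ≠ 0) (h₄ : c₄ ≠ 0) (h₅ : c₅ ≠ 0) :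
    IsBounded (F0S c₁ c₂ c₃ c₄ c₅) := by
  have hA := norm_pos_iff.mpr h₁
  have hB := norm_pos_iff.mpr h₂
  have hC := norm_pos_iff.mpr h₃
  have hD := norm_pos_iff.mpr h₄
  have hE := norm_pos_iff.mpr h₅
  have key : ∀ x E' A' : ℝ, 0 < A' → 0 < E' → A' * Real.exp x < E' → x ≤ Real.log (E' / A') := by
    intro x E' A' hA' hE' h
    have : Real.exp x < E' / A' := by rw [lt_div_iff₀ hA']; linarith [mul_comm A' (Real.exp x)]
    exact ((Real.lt_log_iff_exp_lt (by positivity)).2 this).le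
  apply ((Metric.isBounded_Icc (-(Real.log (‖c₅‖ / ‖c₃‖)))
      (Real.log (‖c₅‖ / ‖c₁‖))).prod
    (Metric.isBounded_Icc (-(Real.log (‖c₅‖ / ‖c₄‖)))
      (Real.log (‖c₅‖ / ‖c₂‖)))).subset
  intro p hp
  simp only [F0S, Set.mem_setOf_eq] at hp
  have e1 := Real.exp_pos p.1
  have e2 := Real.exp_pos p.2
  have e3 := Real.exp_pos (-p.1)
  have e4 := Real.exp_pos (-p.2)
  have b1 : ‖c₁‖ * Real.exp p.1 < ‖c₅‖ := by nlinarith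
  have b2 : ‖c₂‖ * Real.exp p.2 < ‖c₅‖ := by nlinarith
  have b3 : ‖c₃‖ * Real.exp (-p.1) < ‖c₅‖ := by nlinarith
  have b4 : ‖c₄‖ * Real.exp (-p.2) < ‖c₅‖ := by nlinarith
  constructor
  · constructor
    · have := key (-p.1) _ _ hC hE b3; linarith
    · exact key p.1 _ _ hA hE b1
  · constructor
    · have := key (-p.2) _ _ hD hE b4; linarith
    · exact key p.2 _ _ hB hE b2

lemma F0S_nonempty (h₁ : c₁ ≠ 0) (h₂ : c₂ ≠ 0) (h₃ : c₃ ≠ 0) (h₄ : c₄ ≠ 0)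
    (h : 2 * Real.sqrt (‖c₁‖ * ‖c₃‖) +
        2 * Real.sqrt (‖c₂‖ * ‖c₄‖) < ‖c₅‖) :
    (F0S c₁ c₂ c₃ c₄ c₅).Nonempty := by
  have hA := norm_pos_iff.mpr h₁
  have hB := norm_pos_iff.mpr h₂
  have hC := norm_pos_iff.mpr h₃
  have hD := norm_pos_iff.mpr h₄
  have expo : ∀ u : ℝ, 0 < u → Real.exp (Real.log u / 2) = Real.sqrt u := by
    intro u hu
    rw [← Real.log_sqrt hu.le]
    exact Real.exp_log (Real.sqrt_pos.2 hu)
  have prod_eq : ∀ A C : ℝ, 0 < A → 0 < C → A * Real.sqrt (C / A) = Real.sqrt (A * C) := by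
    intro A C hA' hC'
    rw [show A * Real.sqrt (C/A) = Real.sqrt (A^2) * Real.sqrt (C/A) by rw [Real.sqrt_sq hA'.le],
      ← Real.sqrt_mul (by positivity)]
    congr 1
    field_simp
  refine ⟨(Real.log (‖c₃‖ / ‖c₁‖) / 2,
           Real.log (‖c₄‖ / ‖c₂‖) / 2), ?_⟩
  simp only [F0S, Set.mem_setOf_eq]
  have n1 : -(Real.log (‖c₃‖ / ‖c₁‖) / 2) =
      Real.log (‖c₁‖ / ‖c₃‖) / 2 := by
    rw [Real.log_div hC.ne' hA.ne', Real.log_div hA.ne' hC.ne']; ring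
  have n2 : -(Real.log (‖c₄‖ / ‖c₂‖) / 2) =
      Real.log (‖c₂‖ / ‖c₄‖) / 2 := by
    rw [Real.log_div hD.ne' hB.ne', Real.log_div hB.ne' hD.ne']; ring
  rw [n1, n2, expo _ (by positivity), expo _ (by positivity), expo _ (by positivity),
    expo _ (by positivity)]
  rw [prod_eq _ _ hA hC, prod_eq _ _ hB hD, prod_eq _ _ hC hA, prod_eq _ _ hD hB,
    mul_comm (‖c₃‖) (‖c₁‖), mul_comm (‖c₄‖) (‖c₂‖)]
  linarith

lemma F0S_empty (h₁ : c₁ ≠ 0) (h₂ : c₂ ≠ 0) (h₃ : c₃ ≠ 0) (h₄ : c₄ ≠ 0)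
    (h : ‖c₅‖ ≤ 2 * Real.sqrt (‖c₁‖ * ‖c₃‖) +
        2 * Real.sqrt (‖c₂‖ * ‖c₄‖)) :
    F0S c₁ c₂ c₃ c₄ c₅ = ∅ := by
  have hA := norm_pos_iff.mpr h₁
  have hB := norm_pos_iff.mpr h₂
  have hC := norm_pos_iff.mpr h₃
  have hD := norm_pos_iff.mpr h₄
  ext p
  simp only [F0S, Set.mem_setOf_eq, Set.mem_empty_iff_false, iff_false, not_lt]
  have amgm : ∀ u v : ℝ, 0 ≤ u → 0 ≤ v → 2 * Real.sqrt (u*v) ≤ u + v := by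
    intro u v hu hv
    nlinarith [sq_nonneg (Real.sqrt u - Real.sqrt v), Real.sq_sqrt hu, Real.sq_sqrt hv,
      Real.sqrt_nonneg u, Real.sqrt_nonneg v, Real.sqrt_mul hu v]
  have p1 : (‖c₁‖ * Real.exp p.1) * (‖c₃‖ * Real.exp (-p.1)) =
      ‖c₁‖ * ‖c₃‖ := by
    rw [Real.exp_neg]
    field_simp
  have p2 : (‖c₂‖ * Real.exp p.2) * (‖c₄‖ * Real.exp (-p.2)) =
      ‖c₂‖ * ‖c₄‖ := by
    rw [Real.exp_neg]
    field_simp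
  have a1 := amgm (‖c₁‖ * Real.exp p.1) (‖c₃‖ * Real.exp (-p.1))
    (by positivity) (by positivity)
  have a2 := amgm (‖c₂‖ * Real.exp p.2) (‖c₄‖ * Real.exp (-p.2))
    (by positivity) (by positivity)
  rw [p1] at a1
  rw [p2] at a2
  linarith

lemma F0unbd_aux {r : Set (ℝ × ℝ)} (h : ∀ n : ℝ, ∃ p ∈ r, n ≤ ‖p‖) : ¬ IsBounded r := by
  intro hb
  rw [isBounded_iff_forall_norm_le] at hb
  obtain ⟨M, hM⟩ := hb
  obtain ⟨p, hp, hpn⟩ := h (M + 1)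
  have := hM p hp
  linarith

lemma F0ray_right (a b : ℝ) : ¬ IsBounded ((Set.Ici a) ×ˢ ({b} : Set ℝ)) := by
  apply F0unbd_aux
  intro n
  refine ⟨(max a n, b), ⟨Set.mem_Ici.2 (le_max_left _ _), rfl⟩, ?_⟩
  calc n ≤ max a n := le_max_right a n
    _ ≤ |max a n| := le_abs_self _
    _ = ‖(max a n, b).1‖ := (Real.norm_eq_abs _).symm
    _ ≤ ‖(max a n, b)‖ := norm_fst_le _

lemma F0ray_left (a b : ℝ) : ¬ IsBounded ((Set.Iic a) ×ˢ ({b} : Set ℝ)) := by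
  apply F0unbd_aux
  intro n
  refine ⟨(min a (-n), b), ⟨Set.mem_Iic.2 (min_le_left _ _), rfl⟩, ?_⟩
  calc n ≤ -(min a (-n)) := by have := min_le_right a (-n); linarith
    _ ≤ |min a (-n)| := neg_le_abs _
    _ = ‖(min a (-n), b).1‖ := (Real.norm_eq_abs _).symm
    _ ≤ ‖(min a (-n), b)‖ := norm_fst_le _

lemma F0ray_up (a b : ℝ) : ¬ IsBounded (({a} : Set ℝ) ×ˢ (Set.Ici b)) := by
  apply F0unbd_aux
  intro n
  refine ⟨(a, max b n), ⟨rfl, Set.mem_Ici.2 (le_max_left _ _)⟩, ?_⟩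
  calc n ≤ max b n := le_max_right b n
    _ ≤ |max b n| := le_abs_self _
    _ = ‖(a, max b n).2‖ := (Real.norm_eq_abs _).symm
    _ ≤ ‖(a, max b n)‖ := norm_snd_le _

lemma F0ray_down (a b : ℝ) : ¬ IsBounded (({a} : Set ℝ) ×ˢ (Set.Iic b)) := by
  apply F0unbd_aux
  intro n
  refine ⟨(a, min b (-n)), ⟨rfl, Set.mem_Iic.2 (min_le_left _ _)⟩, ?_⟩
  calc n ≤ -(min b (-n)) := by have := min_le_right b (-n); linarith
    _ ≤ |min b (-n)| := neg_le_abs _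
    _ = ‖(a, min b (-n)).2‖ := (Real.norm_eq_abs _).symm
    _ ≤ ‖(a, min b (-n))‖ := norm_snd_le _

lemma F0unbounded_component {v : ℝ × ℝ} {i : Fin 5} (hi : i ≠ 4)
    (hv : v ∈ F0R c₁ c₂ c₃ c₄ c₅ i) :
    ¬ IsBounded (connectedComponentIn (F0lopsidedAmoeba c₁ c₂ c₃ c₄ c₅)ᶜ v) := by
  have hA := norm_nonneg c₁
  have hB := norm_nonneg c₂
  have hC := norm_nonneg c₃
  have hD := norm_nonneg c₄
  have hsubU : ∀ k, F0R c₁ c₂ c₃ c₄ c₅ k ⊆ (F0lopsidedAmoeba c₁ c₂ c₃ c₄ c₅)ᶜ := by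
    intro k
    rw [F0compl_eq]
    exact Set.subset_iUnion (F0R c₁ c₂ c₃ c₄ c₅) k
  have step : ∀ r : Set (ℝ × ℝ), Convex ℝ r → v ∈ r → r ⊆ F0R c₁ c₂ c₃ c₄ c₅ i →
      ¬ IsBounded r → ¬ IsBounded (connectedComponentIn (F0lopsidedAmoeba c₁ c₂ c₃ c₄ c₅)ᶜ v) := by
    intro r hconv hvr hri hub hbd
    exact hub (hbd.subset (hconv.isPreconnected.subset_connectedComponentIn hvr
      ((hri.trans (hsubU i)))))
  have h04 : i = 0 ∨ i = 1 ∨ i = 2 ∨ i = 3 ∨ i = 4 := by fin_cases i <;> simp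
  rw [F0mem_R_iff, F0sum_mono] at hv
  rcases h04 with rfl | rfl | rfl | rfl | rfl
  · refine step ((Set.Ici v.1) ×ˢ {v.2}) ((convex_Ici _).prod (convex_singleton _))
      ⟨Set.self_mem_Ici, rfl⟩ ?_ (F0ray_right _ _)
    rintro ⟨x, y⟩ ⟨hx, hy⟩
    simp only [Set.mem_Ici] at hx
    simp only [Set.mem_singleton_iff] at hy
    rw [F0mem_R_iff, F0sum_mono]
    simp only [F0mono, Matrix.cons_val_zero] at hv ⊢
    subst hy
    have m1 : ‖c₁‖ * Real.exp v.1 ≤ ‖c₁‖ * Real.exp x :=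
      mul_le_mul_of_nonneg_left (Real.exp_le_exp.2 hx) hA
    have m2 : ‖c₃‖ * Real.exp (-x) ≤ ‖c₃‖ * Real.exp (-v.1) :=
      mul_le_mul_of_nonneg_left (Real.exp_le_exp.2 (by linarith)) hC
    linarith
  · refine step (({v.1} : Set ℝ) ×ˢ (Set.Ici v.2)) ((convex_singleton _).prod (convex_Ici _))
      ⟨rfl, Set.self_mem_Ici⟩ ?_ (F0ray_up _ _)
    rintro ⟨x, y⟩ ⟨hx, hy⟩
    simp only [Set.mem_singleton_iff] at hx
    simp only [Set.mem_Ici] at hy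
    rw [F0mem_R_iff, F0sum_mono]
    simp only [F0mono, Matrix.cons_val_one, Matrix.head_cons, Matrix.cons_val_zero] at hv ⊢
    subst hx
    have m1 : ‖c₂‖ * Real.exp v.2 ≤ ‖c₂‖ * Real.exp y :=
      mul_le_mul_of_nonneg_left (Real.exp_le_exp.2 hy) hB
    have m2 : ‖c₄‖ * Real.exp (-y) ≤ ‖c₄‖ * Real.exp (-v.2) :=
      mul_le_mul_of_nonneg_left (Real.exp_le_exp.2 (by linarith)) hD
    linarith
  · refine step ((Set.Iic v.1) ×ˢ {v.2}) ((convex_Iic _).prod (convex_singleton _))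
      ⟨Set.self_mem_Iic, rfl⟩ ?_ (F0ray_left _ _)
    rintro ⟨x, y⟩ ⟨hx, hy⟩
    simp only [Set.mem_Iic] at hx
    simp only [Set.mem_singleton_iff] at hy
    rw [F0mem_R_iff, F0sum_mono]
    simp only [F0mono, Matrix.cons_val_two, Matrix.tail_cons, Matrix.head_cons] at hv ⊢
    subst hy
    have m1 : ‖c₃‖ * Real.exp (-v.1) ≤ ‖c₃‖ * Real.exp (-x) :=
      mul_le_mul_of_nonneg_left (Real.exp_le_exp.2 (by linarith)) hC
    have m2 : ‖c₁‖ * Real.exp x ≤ ‖c₁‖ * Real.exp v.1 :=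
      mul_le_mul_of_nonneg_left (Real.exp_le_exp.2 hx) hA
    linarith
  · refine step (({v.1} : Set ℝ) ×ˢ (Set.Iic v.2)) ((convex_singleton _).prod (convex_Iic _))
      ⟨rfl, Set.self_mem_Iic⟩ ?_ (F0ray_down _ _)
    rintro ⟨x, y⟩ ⟨hx, hy⟩
    simp only [Set.mem_singleton_iff] at hx
    simp only [Set.mem_Iic] at hy
    rw [F0mem_R_iff, F0sum_mono]
    simp only [F0mono, Matrix.cons_val_three, Matrix.tail_cons, Matrix.head_cons] at hv ⊢
    subst hx
    have m1 : ‖c₄‖ * Real.exp (-v.2) ≤ ‖c₄‖ * Real.exp (-y) :=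
      mul_le_mul_of_nonneg_left (Real.exp_le_exp.2 (by linarith)) hD
    have m2 : ‖c₂‖ * Real.exp y ≤ ‖c₂‖ * Real.exp v.2 :=
      mul_le_mul_of_nonneg_left (Real.exp_le_exp.2 hy) hB
    linarith
  · exact absurd rfl hi

lemma F0S_subset_compl : F0S c₁ c₂ c₃ c₄ c₅ ⊆ (F0lopsidedAmoeba c₁ c₂ c₃ c₄ c₅)ᶜ := by
  rw [F0compl_eq, ← F0R4_eq]
  exact Set.subset_iUnion (F0R c₁ c₂ c₃ c₄ c₅) 4

lemma F0component_eq {v : ℝ × ℝ} (hv : v ∈ F0S c₁ c₂ c₃ c₄ c₅) :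
    connectedComponentIn (F0lopsidedAmoeba c₁ c₂ c₃ c₄ c₅)ᶜ v = F0S c₁ c₂ c₃ c₄ c₅ := by
  have hR4 := F0R4_eq c₁ c₂ c₃ c₄ c₅
  apply Set.Subset.antisymm
  · apply IsPreconnected.subset_left_of_subset_union
      (u := F0S c₁ c₂ c₃ c₄ c₅)
      (v := F0R c₁ c₂ c₃ c₄ c₅ 0 ∪ (F0R c₁ c₂ c₃ c₄ c₅ 1 ∪
        (F0R c₁ c₂ c₃ c₄ c₅ 2 ∪ F0R c₁ c₂ c₃ c₄ c₅ 3)))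
    · rw [← hR4]; exact F0R_open c₁ c₂ c₃ c₄ c₅ 4
    · exact ((F0R_open c₁ c₂ c₃ c₄ c₅ 0).union ((F0R_open c₁ c₂ c₃ c₄ c₅ 1).union
        ((F0R_open c₁ c₂ c₃ c₄ c₅ 2).union (F0R_open c₁ c₂ c₃ c₄ c₅ 3))))
    · rw [← hR4]
      exact Disjoint.union_right (F0R_disjoint c₁ c₂ c₃ c₄ c₅ (by decide))
        (Disjoint.union_right (F0R_disjoint c₁ c₂ c₃ c₄ c₅ (by decide))
          (Disjoint.union_right (F0R_disjoint c₁ c₂ c₃ c₄ c₅ (by decide))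
            (F0R_disjoint c₁ c₂ c₃ c₄ c₅ (by decide))))
    · intro x hx
      have hx' := connectedComponentIn_subset (F0lopsidedAmoeba c₁ c₂ c₃ c₄ c₅)ᶜ v hx
      rw [F0compl_eq] at hx'
      obtain ⟨i, hxi⟩ := Set.mem_iUnion.1 hx'
      have h5 : i = 0 ∨ i = 1 ∨ i = 2 ∨ i = 3 ∨ i = 4 := by fin_cases i <;> simp
      rcases h5 with rfl | rfl | rfl | rfl | rfl
      · exact Or.inr (Or.inl hxi)
      · exact Or.inr (Or.inr (Or.inl hxi))
      · exact Or.inr (Or.inr (Or.inr (Or.inl hxi)))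
      · exact Or.inr (Or.inr (Or.inr (Or.inr hxi)))
      · exact Or.inl (hR4 ▸ hxi)
    · exact ⟨v, mem_connectedComponentIn (F0S_subset_compl c₁ c₂ c₃ c₄ c₅ hv), hv⟩
    · exact isPreconnected_connectedComponentIn
  · exact (F0S_convex c₁ c₂ c₃ c₄ c₅).isPreconnected.subset_connectedComponentIn hv
      (F0S_subset_compl c₁ c₂ c₃ c₄ c₅)

/-- The genus of the lopsided amoeba of F₀ is 1 if `|c₅| > a` and 0 otherwise,
where `a = 2√(|c₁||c₃|) + 2√(|c₂||c₄|)`: the complement of the lopsided amoeba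
has exactly one bounded connected component when `|c₅| > a`, and none when
`|c₅| ≤ a`. -/
theorem F0_lopsided_amoeba_genus
    (c₁ c₂ c₃ c₄ c₅ : ℂ) (h₁ : c₁ ≠ 0) (h₂ : c₂ ≠ 0) (h₃ : c₃ ≠ 0)
    (h₄ : c₄ ≠ 0) (h₅ : c₅ ≠ 0) :
    (2 * Real.sqrt (‖c₁‖ * ‖c₃‖) +
        2 * Real.sqrt (‖c₂‖ * ‖c₄‖) < ‖c₅‖ →
      {C : Set (ℝ × ℝ) | ∃ v ∈ (F0lopsidedAmoeba c₁ c₂ c₃ c₄ c₅)ᶜ,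
        C = connectedComponentIn (F0lopsidedAmoeba c₁ c₂ c₃ c₄ c₅)ᶜ v ∧
        Bornology.IsBounded C}.ncard = 1) ∧
    (‖c₅‖ ≤ 2 * Real.sqrt (‖c₁‖ * ‖c₃‖) +
        2 * Real.sqrt (‖c₂‖ * ‖c₄‖) →
      {C : Set (ℝ × ℝ) | ∃ v ∈ (F0lopsidedAmoeba c₁ c₂ c₃ c₄ c₅)ᶜ,
        C = connectedComponentIn (F0lopsidedAmoeba c₁ c₂ c₃ c₄ c₅)ᶜ v ∧
        Bornology.IsBounded C} = ∅) := by
  constructor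
  · intro h
    obtain ⟨v₀, hv₀⟩ := F0S_nonempty c₁ c₂ c₃ c₄ c₅ h₁ h₂ h₃ h₄ h
    have hset : {C : Set (ℝ × ℝ) | ∃ v ∈ (F0lopsidedAmoeba c₁ c₂ c₃ c₄ c₅)ᶜ,
        C = connectedComponentIn (F0lopsidedAmoeba c₁ c₂ c₃ c₄ c₅)ᶜ v ∧
        Bornology.IsBounded C} = {F0S c₁ c₂ c₃ c₄ c₅} := by
      ext C
      simp only [Set.mem_setOf_eq, Set.mem_singleton_iff]
      constructor
      · rintro ⟨v, hvU, rfl, hbd⟩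
        rw [F0compl_eq] at hvU
        obtain ⟨i, hvi⟩ := Set.mem_iUnion.1 hvU
        by_cases h4 : i = 4
        · subst h4
          rw [F0R4_eq] at hvi
          exact F0component_eq c₁ c₂ c₃ c₄ c₅ hvi
        · exact absurd hbd (F0unbounded_component c₁ c₂ c₃ c₄ c₅ h4 hvi)
      · rintro rfl
        exact ⟨v₀, F0S_subset_compl c₁ c₂ c₃ c₄ c₅ hv₀,
          (F0component_eq c₁ c₂ c₃ c₄ c₅ hv₀).symm,
          F0S_bounded c₁ c₂ c₃ c₄ c₅ h₁ h₂ h₃ h₄ h₅⟩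
    rw [hset, Set.ncard_singleton]
  · intro h
    have hemp := F0S_empty c₁ c₂ c₃ c₄ c₅ h₁ h₂ h₃ h₄ h
    rw [Set.eq_empty_iff_forall_notMem]
    rintro C ⟨v, hvU, rfl, hbd⟩
    rw [F0compl_eq] at hvU
    obtain ⟨i, hvi⟩ := Set.mem_iUnion.1 hvU
    by_cases h4 : i = 4
    · subst h4
      rw [F0R4_eq, hemp] at hvi
      exact hvi
    · exact absurd hbd (F0unbounded_component c₁ c₂ c₃ c₄ c₅ h4 hvi)
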